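/- For all real numbers b, c and every z ∈ ℂ with Im z < 0, the function t ↦ (cos(b t) − cos(c t)) exp(−i z t)/t is integrable on (0, ∞) and exp( 2 ∫_0^∞ (cos(b t) − cos(c t)) exp(−i z t)/t dt ) = (z² − c²)/(z² − b²). (These exponentiated integrals are the structure functions appearing in all the Ψ–Ψ and Ψ–X exchange relations of DY_ħ(ŝl(M+1|N+1)), obtained by setting b, c ∈ {0, ħ, 2ħ, 3ħ}.) -/

import Mathlib

open MeasureTheory Set Complex Filter

noncomputable section

/-- The real part of a point on the segment from `a` to `β`. -/
lemma seg_re_pos {a β : ℂ} (ha : 0 < a.re) (hβ : 0 < β.re) {u : ℝ}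
    (h0 : 0 ≤ u) (h1 : u ≤ 1) : 0 < (a + (u : ℂ) * (β - a)).re := by
  have : (a + (u : ℂ) * (β - a)).re = a.re + u * (β.re - a.re) := by
    simp [Complex.add_re, Complex.sub_re]
  rw [this]
  nlinarith [mul_nonneg h0 hβ.le, mul_nonneg (sub_nonneg.2 h1) ha.le]

lemma integrable_cexp_neg_mul {s : ℂ} (hs : 0 < s.re) :
    IntegrableOn (fun t : ℝ => Complex.exp (-s * t)) (Ioi 0) := by
  apply Integrable.mono' (g := fun t : ℝ => Real.exp (-s.re * t))
    (exp_neg_integrableOn_Ioi 0 hs)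
  · exact (Continuous.cexp (by continuity)).aestronglyMeasurable
  · filter_upwards with t
    rw [Complex.norm_exp]
    simp

lemma integral_cexp_neg_mul {s : ℂ} (hs : 0 < s.re) :
    ∫ t : ℝ in Ioi 0, Complex.exp (-s * t) = 1 / s := by
  have hs0 : s ≠ 0 := fun h => by simp [h] at hs
  have hderiv : ∀ x ∈ Ioi (0:ℝ),
      HasDerivAt (fun t : ℝ => -Complex.exp (-s * t) / s) (Complex.exp (-s * x)) x := by
    intro x _
    have h1 : HasDerivAt (fun w : ℂ => -Complex.exp (-s * w) / s)
        (Complex.exp (-s * x)) (x : ℂ) := by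
      have := (((hasDerivAt_id (x:ℂ)).const_mul (-s)).cexp.neg).div_const s
      refine this.congr_deriv ?_
      simp only [id, Pi.neg_apply]
      field_simp
    exact h1.comp_ofReal
  have htend : Tendsto (fun t : ℝ => -Complex.exp (-s * t) / s) atTop (nhds 0) := by
    rw [tendsto_zero_iff_norm_tendsto_zero]
    have : (fun t : ℝ => ‖-Complex.exp (-s * t) / s‖)
        = fun t : ℝ => Real.exp (-s.re * t) / ‖s‖ := by
      funext t
      rw [norm_div, norm_neg, Complex.norm_exp]
      simp
    rw [this]
    have h1 : Tendsto (fun t : ℝ => s.re * t) atTop atTop :=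
      Tendsto.const_mul_atTop hs tendsto_id
    have h2 : Tendsto (fun t : ℝ => Real.exp (-(s.re * t))) atTop (nhds 0) :=
      Real.tendsto_exp_neg_atTop_nhds_zero.comp h1
    simpa [neg_mul, zero_div] using h2.div_const ‖s‖
  have := integral_Ioi_of_hasDerivAt_of_tendsto
    (f := fun t : ℝ => -Complex.exp (-s * t) / s)
    (f' := fun t : ℝ => Complex.exp (-s * t)) (a := 0)
    (by
      apply Continuous.continuousWithinAt
      exact ((Continuous.cexp (by continuity)).neg).div_const s)
    hderiv (integrable_cexp_neg_mul hs) htend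
  rw [this]; simp; field_simp

set_option maxHeartbeats 2000000 in
/-- Complex Frullani integral for exponentials. -/
lemma frullani_cexp {a β : ℂ} (ha : 0 < a.re) (hβ : 0 < β.re) :
    IntegrableOn
      (fun t : ℝ => (Complex.exp (-a * t) - Complex.exp (-β * t)) / t) (Ioi 0) ∧
    ∫ t : ℝ in Ioi 0, (Complex.exp (-a * t) - Complex.exp (-β * t)) / t
      = Complex.log β - Complex.log a := by
  set m : ℝ := min a.re β.re with hm
  have hm0 : 0 < m := lt_min ha hβ
  set F : ℝ → ℝ → ℂ := fun t u => (β - a) * Complex.exp (-(a + (u:ℂ) * (β - a)) * t)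
    with hF
  -- product integrability
  have hFi : Integrable (Function.uncurry F)
      ((volume.restrict (Ioi 0)).prod (volume.restrict (Ioc 0 1))) := by
    have hg1 : Integrable (fun t : ℝ => Real.exp (-m * t)) (volume.restrict (Ioi 0)) :=
      exp_neg_integrableOn_Ioi 0 hm0
    have hg2 : Integrable (fun _ : ℝ => ‖β - a‖) (volume.restrict (Ioc (0:ℝ) 1)) :=
      (integrableOn_const_iff).2 (Or.inr measure_Ioc_lt_top)
    apply Integrable.mono'
      (g := fun p : ℝ × ℝ => Real.exp (-m * p.1) * ‖β - a‖) (hg1.mul_prod hg2)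
    · apply Continuous.aestronglyMeasurable
      apply Continuous.mul continuous_const
      apply Continuous.cexp
      continuity
    · rw [Measure.prod_restrict, ae_restrict_iff' (measurableSet_Ioi.prod measurableSet_Ioc)]
      filter_upwards with p hp
      obtain ⟨ht, hu⟩ := hp
      simp only [Function.uncurry, hF, norm_mul, Complex.norm_exp]
      rw [mul_comm (Real.exp _)]
      have hre : m ≤ (a + (p.2:ℂ) * (β - a)).re := by
        have : (a + (p.2:ℂ) * (β - a)).re = a.re + p.2 * (β.re - a.re) := by
          simp [Complex.add_re, Complex.sub_re]
        rw [this]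
        rcases hu with ⟨hu0, hu1⟩
        nlinarith [min_le_left a.re β.re, min_le_right a.re β.re]
      have ht' : (0:ℝ) ≤ p.1 := le_of_lt ht
      have heq : (-(a + (p.2:ℂ) * (β - a)) * p.1).re
          = -(a + (p.2:ℂ) * (β - a)).re * p.1 := by
        simp [Complex.mul_re]
      rw [heq]
      gcongr
  -- inner FTC: for t > 0
  have hinner : ∀ t ∈ Ioi (0:ℝ),
      ∫ u in Ioc (0:ℝ) 1, F t u
        = (Complex.exp (-a * t) - Complex.exp (-β * t)) / t := by
    intro t ht
    have ht0 : (t:ℂ) ≠ 0 := by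
      simp only [ne_eq, Complex.ofReal_eq_zero]; exact ne_of_gt ht
    rw [← intervalIntegral.integral_of_le (by norm_num : (0:ℝ) ≤ 1)]
    have hd : ∀ u ∈ Set.uIcc (0:ℝ) 1,
        HasDerivAt (fun u : ℝ => -Complex.exp (-(a + (u:ℂ) * (β - a)) * t) / t)
          (F t u) u := by
      intro u _
      have h1 : HasDerivAt (fun w : ℂ => -Complex.exp (-(a + w * (β - a)) * t) / t)
          (F t u) (u : ℂ) := by
        have := (((((hasDerivAt_id (u:ℂ)).mul_const (β - a)).const_add a).neg.mul_const
          (t:ℂ)).cexp.neg).div_const (t:ℂ)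
        refine this.congr_deriv ?_
        simp only [hF, id, Pi.neg_apply]
        field_simp
      exact h1.comp_ofReal
    have hc : IntervalIntegrable (F t) volume 0 1 := by
      apply Continuous.intervalIntegrable
      apply Continuous.mul continuous_const
      apply Continuous.cexp
      continuity
    rw [intervalIntegral.integral_eq_sub_of_hasDerivAt hd hc]
    push_cast
    field_simp
    ring_nf
  -- outer : for each u, ∫ t
  have houter : ∀ u ∈ Ioc (0:ℝ) 1,
      ∫ t : ℝ in Ioi 0, F t u = (β - a) / (a + (u:ℂ) * (β - a)) := by
    intro u hu
    have hre := seg_re_pos ha hβ (le_of_lt hu.1) hu.2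
    simp only [hF]
    rw [MeasureTheory.integral_const_mul, integral_cexp_neg_mul hre]
    field_simp
  -- log FTC
  have hlog : ∫ u in Ioc (0:ℝ) 1, (β - a) / (a + (u:ℂ) * (β - a))
      = Complex.log β - Complex.log a := by
    rw [← intervalIntegral.integral_of_le (by norm_num : (0:ℝ) ≤ 1)]
    have hd : ∀ u ∈ Set.uIcc (0:ℝ) 1,
        HasDerivAt (fun u : ℝ => Complex.log (a + (u:ℂ) * (β - a)))
          ((β - a) / (a + (u:ℂ) * (β - a))) u := by
      intro u hu
      rw [Set.uIcc_of_le (by norm_num : (0:ℝ) ≤ 1)] at hu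
      have hre := seg_re_pos ha hβ hu.1 hu.2
      have hne : a + (u:ℂ) * (β - a) ≠ 0 := by
        intro h; rw [h] at hre; simp at hre
      have h1 : HasDerivAt (fun w : ℂ => Complex.log (a + w * (β - a)))
          ((β - a) / (a + (u:ℂ) * (β - a))) (u : ℂ) := by
        have hin : HasDerivAt (fun w : ℂ => a + w * (β - a)) (β - a) (u:ℂ) := by
          simpa using ((hasDerivAt_id (u:ℂ)).mul_const (β - a)).const_add a
        have hlog' := Complex.hasDerivAt_log (Or.inl hre)
        have := HasDerivAt.comp (u:ℂ) hlog' hin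
        refine this.congr_deriv ?_
        field_simp
      exact h1.comp_ofReal
    have hc : IntervalIntegrable (fun u : ℝ => (β - a) / (a + (u:ℂ) * (β - a)))
        volume 0 1 := by
      apply ContinuousOn.intervalIntegrable
      apply ContinuousOn.div continuousOn_const
      · exact Continuous.continuousOn (by continuity)
      · intro u hu
        rw [Set.uIcc_of_le (by norm_num : (0:ℝ) ≤ 1)] at hu
        have hre := seg_re_pos ha hβ hu.1 hu.2
        intro h; rw [h] at hre; simp at hre
    rw [intervalIntegral.integral_eq_sub_of_hasDerivAt hd hc]
    simp [Complex.ofReal_zero, Complex.ofReal_one]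
  constructor
  · -- integrability
    have := hFi.integral_prod_left
    apply this.congr
    rw [EventuallyEq, ae_restrict_iff' measurableSet_Ioi]
    filter_upwards with t ht
    exact hinner t ht
  · calc ∫ t : ℝ in Ioi 0, (Complex.exp (-a * t) - Complex.exp (-β * t)) / t
        = ∫ t : ℝ in Ioi 0, ∫ u in Ioc (0:ℝ) 1, F t u := by
          apply setIntegral_congr_fun measurableSet_Ioi
          intro t ht; exact (hinner t ht).symm
      _ = ∫ u in Ioc (0:ℝ) 1, ∫ t : ℝ in Ioi 0, F t u :=
          integral_integral_swap hFi
      _ = ∫ u in Ioc (0:ℝ) 1, (β - a) / (a + (u:ℂ) * (β - a)) := by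
          apply setIntegral_congr_fun measurableSet_Ioc
          intro u hu; exact houter u hu
      _ = Complex.log β - Complex.log a := hlog

end

/-- For real `b, c` and `z ∈ ℂ` with `Im z < 0`, the function
`t ↦ (cos(b t) - cos(c t)) exp(-i z t)/t` is integrable on `(0, ∞)` and
`exp(2 ∫_0^∞ (cos(b t) - cos(c t)) exp(-i z t)/t dt) = (z² - c²)/(z² - b²)`.
These exponentiated integrals are the structure functions of the exchange relations of
`DY_ħ(ŝl(M+1|N+1))`, obtained for `b, c ∈ {0, ħ, 2ħ, 3ħ}`. -/
theorem exp_two_mul_cos_frullani_integral (b c : ℝ) (z : ℂ) (hz : z.im < 0) :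
    MeasureTheory.IntegrableOn
      (fun t : ℝ =>
        (Complex.cos (b * t) - Complex.cos (c * t)) * Complex.exp (-Complex.I * z * t) / t)
      (Set.Ioi 0) ∧
    Complex.exp (2 * ∫ t : ℝ in Set.Ioi 0,
        (Complex.cos (b * t) - Complex.cos (c * t)) * Complex.exp (-Complex.I * z * t) / t)
      = (z ^ 2 - (c : ℂ) ^ 2) / (z ^ 2 - (b : ℂ) ^ 2) := by
  have hre : ∀ w : ℝ, 0 < (Complex.I * (z - w)).re := by
    intro w; simp [Complex.mul_re, Complex.sub_im]; linarith
  have hre' : ∀ w : ℝ, 0 < (Complex.I * (z + w)).re := by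
    intro w; simp [Complex.mul_re, Complex.add_im]; linarith
  obtain ⟨i1, v1⟩ := frullani_cexp (hre b) (hre c)
  obtain ⟨i2, v2⟩ := frullani_cexp (hre' b) (hre' c)
  -- pointwise identity
  have e1 : ∀ (w t : ℝ), Complex.exp (-(Complex.I * (z - w)) * t)
      = Complex.exp ((w * t : ℂ) * Complex.I) * Complex.exp (-Complex.I * z * t) := by
    intro w t
    rw [← Complex.exp_add]; congr 1; ring
  have e2 : ∀ (w t : ℝ), Complex.exp (-(Complex.I * (z + w)) * t)
      = Complex.exp (-(w * t : ℂ) * Complex.I) * Complex.exp (-Complex.I * z * t) := by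
    intro w t
    rw [← Complex.exp_add]; congr 1; ring
  have hkey : (fun t : ℝ =>
      (Complex.cos (b * t) - Complex.cos (c * t)) * Complex.exp (-Complex.I * z * t) / t)
      = fun t : ℝ =>
        ((Complex.exp (-(Complex.I * (z - b)) * t) - Complex.exp (-(Complex.I * (z - c)) * t)) / t
        + (Complex.exp (-(Complex.I * (z + b)) * t) - Complex.exp (-(Complex.I * (z + c)) * t)) / t)
        / 2 := by
    funext t
    have hnum : (Complex.cos (b * t) - Complex.cos (c * t)) * Complex.exp (-Complex.I * z * t) * 2
        = (Complex.exp (-(Complex.I * (z - b)) * t) - Complex.exp (-(Complex.I * (z - c)) * t))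
        + (Complex.exp (-(Complex.I * (z + b)) * t) - Complex.exp (-(Complex.I * (z + c)) * t)) := by
      rw [e1 b t, e1 c t, e2 b t, e2 c t]
      simp only [Complex.cos]
      push_cast
      ring
    rw [← add_div, ← hnum]
    ring
  rw [hkey]
  have hint := (i1.add i2).div_const 2
  refine ⟨hint, ?_⟩
  rw [MeasureTheory.integral_div, MeasureTheory.integral_add i1 i2, v1, v2]
  have hne1 : Complex.I * (z - b) ≠ 0 := by
    intro h; have := hre b; rw [h] at this; simp at this
  have hne2 : Complex.I * (z - c) ≠ 0 := by
    intro h; have := hre c; rw [h] at this; simp at this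
  have hne3 : Complex.I * (z + b) ≠ 0 := by
    intro h; have := hre' b; rw [h] at this; simp at this
  have hne4 : Complex.I * (z + c) ≠ 0 := by
    intro h; have := hre' c; rw [h] at this; simp at this
  have h2 : 2 * ((Complex.log (Complex.I * (z - c)) - Complex.log (Complex.I * (z - b))
      + (Complex.log (Complex.I * (z + c)) - Complex.log (Complex.I * (z + b)))) / 2)
      = Complex.log (Complex.I * (z - c)) - Complex.log (Complex.I * (z - b))
      + (Complex.log (Complex.I * (z + c)) - Complex.log (Complex.I * (z + b))) := by ring
  rw [h2, Complex.exp_add, Complex.exp_sub, Complex.exp_sub,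
    Complex.exp_log hne1, Complex.exp_log hne2, Complex.exp_log hne3, Complex.exp_log hne4,
    mul_div_mul_left _ _ Complex.I_ne_zero, mul_div_mul_left _ _ Complex.I_ne_zero,
    div_mul_div_comm]
  congr 1 <;> ring
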